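/- arXiv:1507.00135 — 2 statements merged into one kernel-verified Lean document; each statement's English description precedes it below -/
import Mathlib

section
/- Let G be a non-abelian, irreducible subgroup of PL_o([0,∞[) such that every element of the image of ρ : G → Aff_o(ℝ) is a translation, and let τ_r : G → ℝ send g to the amplitude of the translation ρ(g). If the character χ_ℓ = ln∘σ_ℓ is non-zero then [χ_ℓ] ∉ Σ¹(G); similarly, if τ_r is non-zero then [−τ_r] ∉ Σ¹(G). -/
open Set

/-- A map `g : ℝ → ℝ` is *finitary piecewise linear* if there is a finite set of
breakpoints outside of which `g` is locally affine. -/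
def IsFinitaryPL (g : ℝ → ℝ) : Prop :=
  ∃ B : Finset ℝ, ∀ t : ℝ, t ∉ B →
    ∃ m b : ℝ, ∃ ε : ℝ, 0 < ε ∧ ∀ u : ℝ, |u - t| < ε → g u = m * u + b

/-- The support of a map of the real line. -/
def suppOf (g : ℝ → ℝ) : Set ℝ := {t : ℝ | g t ≠ t}

/-- `PLo I` is the set of orientation-preserving (i.e. strictly increasing) finitary
piecewise linear homeomorphisms of `ℝ` with support contained in `I`. -/
def PLo (I : Set ℝ) : Set (Equiv.Perm ℝ) :=
  {g : Equiv.Perm ℝ | StrictMono ⇑g ∧ IsFinitaryPL ⇑g ∧ suppOf ⇑g ⊆ I}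

/-- The right derivative of `g` at `a`. -/
noncomputable def rightSlope (g : ℝ → ℝ) (a : ℝ) : ℝ := derivWithin g (Ici a) a

/-- The left derivative of `g` at `c`. -/
noncomputable def leftSlope (g : ℝ → ℝ) (c : ℝ) : ℝ := derivWithin g (Iic c) c

/-- The amplitude of the translation with which `g` coincides near `+∞`. -/
noncomputable def amplTop (g : ℝ → ℝ) : ℝ :=
  Filter.limUnder Filter.atTop (fun t => g t - t)

/-- The amplitude of the translation with which `g` coincides near `-∞`. -/
noncomputable def amplBot (g : ℝ → ℝ) : ℝ :=
  Filter.limUnder Filter.atBot (fun t => g t - t)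

/-- A character of a group is a homomorphism into `(ℝ, +)`. -/
def IsChar {Γ : Type*} [Group Γ] (χ : Γ → ℝ) : Prop :=
  ∀ g h : Γ, χ (g * h) = χ g + χ h

/-- Two characters lie on the same ray: `ψ` is a positive multiple of `χ`. -/
def SameRayChar {Γ : Type*} (χ ψ : Γ → ℝ) : Prop :=
  ∃ r : ℝ, 0 < r ∧ ∀ g : Γ, ψ g = r * χ g

/-- The subgraph `Γ(G, X)_χ` of the Cayley graph of `G` with respect to the generating
set `X`, spanned by the vertices `g` with `χ g ≥ 0`, is connected. -/
def CayleyConnected {Γ : Type*} [Group Γ] (X : Set Γ) (χ : Γ → ℝ) : Prop :=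
  ∀ g h : Γ, 0 ≤ χ g → 0 ≤ χ h →
    Relation.ReflTransGen
      (fun u v : Γ => 0 ≤ χ u ∧ 0 ≤ χ v ∧ ∃ x ∈ X, v = u * x ∨ u = v * x) g h

/-- `[χ] ∈ Σ¹(G)`: for every generating set `X` of `G` the subgraph `Γ(G,X)_χ`
of the Cayley graph is connected. -/
def MemSigma1 {Γ : Type*} [Group Γ] (χ : Γ → ℝ) : Prop :=
  ∀ X : Set Γ, Subgroup.closure X = ⊤ → CayleyConnected X χ

/-- The character `χ_ℓ = ln ∘ σ_ℓ` of a subgroup `G` of `PL_o([a,c])`. -/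
noncomputable def chiL (G : Subgroup (Equiv.Perm ℝ)) (a : ℝ) : G → ℝ :=
  fun g => Real.log (rightSlope (⇑(g : Equiv.Perm ℝ)) a)

/-- The character `χ_r = ln ∘ σ_r` of a subgroup `G` of `PL_o([a,c])`. -/
noncomputable def chiR (G : Subgroup (Equiv.Perm ℝ)) (c : ℝ) : G → ℝ :=
  fun g => Real.log (leftSlope (⇑(g : Equiv.Perm ℝ)) c)

lemma PLo.fix_neg {f : Equiv.Perm ℝ} (hf : f ∈ PLo (Ici 0)) {t : ℝ} (ht : t < 0) : f t = t := by
  by_contra h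
  exact absurd (hf.2.2 h) (by simpa using ht.not_ge)

lemma PLo.fix_zero {f : Equiv.Perm ℝ} (hf : f ∈ PLo (Ici 0)) : f 0 = 0 := by
  rcases lt_trichotomy (f 0) 0 with h | h | h
  · -- f (f 0) = f 0 since f 0 < 0, and injectivity gives f 0 = 0, contradiction
    have h1 : f (f 0) = f 0 := PLo.fix_neg hf h
    exact f.injective h1
  · exact h
  · -- pick preimage of (f 0)/2 ∈ (0, f 0)
    obtain ⟨x, hx⟩ := f.surjective (f 0 / 2)
    rcases lt_trichotomy x 0 with hx0 | hx0 | hx0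
    · have : f x = x := PLo.fix_neg hf hx0
      nlinarith [hx, this]
    · subst hx0; nlinarith [hx]
    · have : f 0 < f x := hf.1 hx0
      nlinarith [hx]

lemma PLo.nonneg {f : Equiv.Perm ℝ} (hf : f ∈ PLo (Ici 0)) {t : ℝ} (ht : 0 ≤ t) : 0 ≤ f t := by
  have := hf.1.monotone ht
  rwa [PLo.fix_zero hf] at this

-- ## Local affineness propagates

private lemma match2 {m b m' b' t1 t2 : ℝ} (h12 : t1 ≠ t2)
    (e1 : m' * t1 + b' = m * t1 + b) (e2 : m' * t2 + b' = m * t2 + b) :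
    m' = m ∧ b' = b := by
  have h3 : (m' - m) * (t1 - t2) = 0 := by linear_combination e1 - e2
  rcases mul_eq_zero.mp h3 with h | h
  · have hm : m' = m := by linarith
    refine ⟨hm, by linear_combination e1 - t1 * hm⟩
  · exact absurd (by linarith : t1 = t2) h12

lemma affine_propagate (f : ℝ → ℝ) (lo hi : ℝ)
    (hloc : ∀ t, t ∈ Ioo lo hi → ∃ m b ε, 0 < ε ∧ ∀ u, |u - t| < ε → f u = m * u + b)
    (c : ℝ) (hc : c ∈ Ioo lo hi) (m b ε : ℝ) (hε : 0 < ε)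
    (hmb : ∀ u, |u - c| < ε → f u = m * u + b)
    (x : ℝ) (hx : x ∈ Ioo lo hi) (hcx : c ≤ x) : f x = m * x + b := by
  rcases eq_or_lt_of_le hcx with h | hcx
  · subst h
    exact hmb c (by simpa using hε)
  set A := {r : ℝ | r ∈ Icc c x ∧ ∀ t, t ∈ Icc c r → f t = m * t + b} with hA
  have hcA : c ∈ A := by
    refine ⟨⟨le_refl _, hcx.le⟩, fun t ht => ?_⟩
    have : t = c := le_antisymm ht.2 ht.1
    subst this
    exact hmb t (by simpa using hε)
  have hbdd : BddAbove A := ⟨x, fun r hr => hr.1.2⟩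
  have hne : A.Nonempty := ⟨c, hcA⟩
  set r0 := sSup A with hr0
  have hr0c : c ≤ r0 := le_csSup hbdd hcA
  have hr0x : r0 ≤ x := csSup_le hne (fun r hr => hr.1.2)
  have key : ∀ t, c ≤ t → t < r0 → f t = m * t + b := by
    intro t h1 h2
    obtain ⟨r, hrA, htr⟩ := exists_lt_of_lt_csSup hne h2
    exact hrA.2 t ⟨h1, htr.le⟩
  obtain ⟨m', b', ε', hε', hmb'⟩ := hloc r0 ⟨lt_of_lt_of_le hc.1 hr0c, lt_of_le_of_lt hr0x hx.2⟩
  clear_value r0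
  have hmatch : m' = m ∧ b' = b := by
    rcases eq_or_lt_of_le hr0c with h | h
    · -- r0 = c : compare on points just above c
      have hδ0 : 0 < min (min ε ε') (x - c) := by
        simp only [lt_min_iff]
        exact ⟨⟨hε, hε'⟩, by linarith⟩
      have h1e := min_le_left ε ε'
      have h2e := min_le_right ε ε'
      have h3e := min_le_left (min ε ε') (x - c)
      set δ := min (min ε ε') (x - c) with hδ
      set t1 := c + δ/3 with ht1
      set t2 := c + δ/2 with ht2
      have h12 : t1 ≠ t2 := by simp only [ht1, ht2]; intro hh; linarith
      have f1 : f t1 = m * t1 + b := by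
        refine hmb t1 ?_
        rw [ht1, abs_lt]; constructor <;> linarith
      have f2 : f t2 = m * t2 + b := by
        refine hmb t2 ?_
        rw [ht2, abs_lt]; constructor <;> linarith
      have f1' : f t1 = m' * t1 + b' := by
        refine hmb' t1 ?_
        rw [ht1, ← h, abs_lt]; constructor <;> linarith
      have f2' : f t2 = m' * t2 + b' := by
        refine hmb' t2 ?_
        rw [ht2, ← h, abs_lt]; constructor <;> linarith
      exact match2 h12 (f1'.symm.trans f1) (f2'.symm.trans f2)
    · -- c < r0 : compare on points just below r0
      have hcmax : c ≤ max c (r0 - ε') := le_max_left _ _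
      have hεmax : r0 - ε' ≤ max c (r0 - ε') := le_max_right _ _
      have hlolt : max c (r0 - ε') < r0 := by
        rw [max_lt_iff]
        exact ⟨h, by linarith⟩
      set lo' := max c (r0 - ε') with hlo'
      set t1 := lo' + (r0 - lo')/3 with ht1
      set t2 := lo' + (r0 - lo')/2 with ht2
      have h12 : t1 ≠ t2 := by simp only [ht1, ht2]; intro hh; linarith
      have f1 : f t1 = m * t1 + b := key t1 (by rw [ht1]; linarith) (by rw [ht1]; linarith)
      have f2 : f t2 = m * t2 + b := key t2 (by rw [ht2]; linarith) (by rw [ht2]; linarith)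
      have f1' : f t1 = m' * t1 + b' := by
        refine hmb' t1 ?_
        rw [ht1, abs_lt]; constructor <;> linarith
      have f2' : f t2 = m' * t2 + b' := by
        refine hmb' t2 ?_
        rw [ht2, abs_lt]; constructor <;> linarith
      exact match2 h12 (f1'.symm.trans f1) (f2'.symm.trans f2)
  obtain ⟨hm', hb'⟩ := hmatch
  subst hm'; subst hb'
  -- now show r0 = x
  have hr0eq : r0 = x := by
    by_contra hne'
    have hlt : r0 < x := lt_of_le_of_ne hr0x hne'
    have hrc : c ≤ min x (r0 + ε'/2) := le_min hcx.le (by linarith)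
    have hrx : min x (r0 + ε'/2) ≤ x := min_le_left _ _
    have hrlow : r0 < min x (r0 + ε'/2) := lt_min hlt (by linarith)
    have hr'A : min x (r0 + ε'/2) ∈ A := by
      refine ⟨⟨hrc, hrx⟩, fun t ht => ?_⟩
      rcases lt_or_ge t r0 with hcase | hcase
      · exact key t ht.1 hcase
      · refine hmb' t ?_
        rw [abs_lt]
        have h2 : t ≤ r0 + ε'/2 := le_trans ht.2 (min_le_right _ _)
        constructor <;> linarith
    have hcon : min x (r0 + ε'/2) ≤ sSup A := le_csSup hbdd hr'A
    rw [← hr0] at hcon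
    linarith
  have hfin := hmb' r0 (by simpa using hε')
  rw [hr0eq] at hfin
  exact hfin

lemma locallyAffine_affine (f : ℝ → ℝ) (lo hi : ℝ) (h : lo < hi)
    (hloc : ∀ t, t ∈ Ioo lo hi → ∃ m b ε, 0 < ε ∧ ∀ u, |u - t| < ε → f u = m * u + b) :
    ∃ m b, ∀ t, t ∈ Ioo lo hi → f t = m * t + b := by
  have hc : (lo+hi)/2 ∈ Ioo lo hi := ⟨by linarith, by linarith⟩
  obtain ⟨m, b, ε, hε, hmb⟩ := hloc _ hc
  refine ⟨m, b, fun x hx => ?_⟩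
  rcases le_or_gt ((lo+hi)/2) x with hcx | hxc
  · exact affine_propagate f lo hi hloc _ hc m b ε hε hmb x hx hcx
  · have mloc : ∀ t, t ∈ Ioo (-hi) (-lo) →
        ∃ m' b' ε', 0 < ε' ∧ ∀ u, |u - t| < ε' → f (-u) = m' * u + b' := by
      intro t ht
      obtain ⟨m1, b1, ε1, hε1, hm1⟩ := hloc (-t) ⟨by linarith [ht.2], by linarith [ht.1]⟩
      refine ⟨-m1, b1, ε1, hε1, fun u hu => ?_⟩
      have : |(-u) - (-t)| < ε1 := by
        have h2 : (-u) - (-t) = -(u - t) := by ring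
        rw [h2, abs_neg]
        exact hu
      rw [hm1 (-u) this]; ring
    have mmb : ∀ u, |u - (-((lo+hi)/2))| < ε → f (-u) = -m * u + b := by
      intro u hu
      have : |(-u) - ((lo+hi)/2)| < ε := by
        have h2 : (-u) - ((lo+hi)/2) = -(u - (-((lo+hi)/2))) := by ring
        rw [h2, abs_neg]
        exact hu
      rw [hmb (-u) this]; ring
    have key := affine_propagate (fun u => f (-u)) (-hi) (-lo) mloc _
      ⟨by linarith, by linarith⟩ (-m) b ε hε mmb (-x)
      ⟨by linarith [hx.2], by linarith [hx.1]⟩ (by linarith)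
    simp only [neg_neg] at key
    rw [key]; ring

lemma PLo.exists_window {f : Equiv.Perm ℝ} (hf : f ∈ PLo (Ici 0)) :
    ∃ m δ : ℝ, 0 < m ∧ 0 < δ ∧ ∀ t, 0 ≤ t → t < δ → f t = m * t := by
  classical
  obtain ⟨B, hB⟩ := hf.2.1
  have hmono := hf.1
  have hzero := PLo.fix_zero hf
  set P := B.filter (fun u => 0 < u) with hP
  set δ0 := if hPne : P.Nonempty then min (P.min' hPne) 1 else 1 with hδ0
  have hδ0pos : 0 < δ0 := by
    rw [hδ0]
    split
    · rename_i hPne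
      refine lt_min ?_ one_pos
      have := Finset.min'_mem P hPne
      exact (Finset.mem_filter.mp this).2
    · exact one_pos
  have hδ0B : ∀ t, 0 < t → t < δ0 → t ∉ B := by
    intro t ht htδ hmem
    have htP : t ∈ P := Finset.mem_filter.mpr ⟨hmem, ht⟩
    have hPne : P.Nonempty := ⟨t, htP⟩
    have h1 : P.min' hPne ≤ t := Finset.min'_le P t htP
    rw [hδ0, dif_pos hPne] at htδ
    have := min_le_left (P.min' hPne) 1
    linarith
  have hloc : ∀ t, t ∈ Ioo 0 δ0 → ∃ m b ε, 0 < ε ∧ ∀ u, |u - t| < ε → f u = m * u + b :=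
    fun t ht => hB t (hδ0B t ht.1 ht.2)
  obtain ⟨m, b, hmb⟩ := locallyAffine_affine (⇑f) 0 δ0 hδ0pos hloc
  have ht1 : δ0/3 ∈ Ioo 0 δ0 := ⟨by linarith, by linarith⟩
  have ht2 : δ0/2 ∈ Ioo 0 δ0 := ⟨by linarith, by linarith⟩
  have hm : 0 < m := by
    have h1 := hmb _ ht1
    have h2 := hmb _ ht2
    have h3 : f (δ0/3) < f (δ0/2) := hmono (by linarith)
    rw [h1, h2] at h3
    nlinarith
  have hbnn : 0 ≤ b := by
    by_contra hb
    push_neg at hb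
    set t := min (δ0/2) (-b/(2*m)) with ht
    have htpos : 0 < t := lt_min (by linarith) (div_pos (by linarith) (by linarith))
    have htlt : t < δ0 := lt_of_le_of_lt (min_le_left _ _) (by linarith)
    have h1 : f t = m * t + b := hmb t ⟨htpos, htlt⟩
    have h2 : (0:ℝ) = f 0 := hzero.symm
    have h3 : f 0 < f t := hmono htpos
    have h4 : m * t ≤ m * (-b/(2*m)) := by
      apply mul_le_mul_of_nonneg_left (min_le_right _ _) hm.le
    have h5 : m * (-b/(2*m)) = -b/2 := by field_simp
    rw [h1] at h3
    rw [← h2] at h3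
    linarith [h4, h5 ▸ h4]
  have hbnp : b ≤ 0 := by
    by_contra hb
    push_neg at hb
    obtain ⟨x, hx⟩ := f.surjective (b/2)
    rcases lt_trichotomy x 0 with hx0 | hx0 | hx0
    · have : f x = x := PLo.fix_neg hf hx0
      rw [hx] at this
      linarith
    · subst hx0
      rw [hzero] at hx
      linarith
    · rcases lt_or_ge x (δ0/2) with hxδ | hxδ
      · have : f x = m * x + b := hmb x ⟨hx0, by linarith⟩
        rw [hx] at this
        nlinarith
      · have h1 : f (δ0/2) ≤ f x := hmono.monotone hxδ
        have h2 : f (δ0/2) = m * (δ0/2) + b := hmb _ ht2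
        rw [hx, h2] at h1
        nlinarith
  have hb0 : b = 0 := le_antisymm hbnp hbnn
  subst hb0
  refine ⟨m, δ0, hm, hδ0pos, fun t ht0 htδ => ?_⟩
  rcases eq_or_lt_of_le ht0 with h | h
  · rw [← h, hzero]; ring
  · rw [hmb t ⟨h, htδ⟩]; ring

lemma window_unique {g : ℝ → ℝ} {m δ m' δ' : ℝ} (hδ : 0 < δ) (hδ' : 0 < δ')
    (h : ∀ t, 0 ≤ t → t < δ → g t = m * t) (h' : ∀ t, 0 ≤ t → t < δ' → g t = m' * t) :
    m = m' := by
  set t := min δ δ' / 2 with ht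
  have ht0 : 0 < t := by
    rw [ht]
    have := lt_min hδ hδ'
    linarith [lt_min hδ hδ']
  have h1 := h t ht0.le (by rw [ht]; linarith [min_le_left δ δ'])
  have h2 := h' t ht0.le (by rw [ht]; linarith [min_le_right δ δ'])
  have : m * t = m' * t := h1 ▸ h2
  exact mul_right_cancel₀ (ne_of_gt ht0) this

lemma window_rightSlope {g : ℝ → ℝ} {m δ : ℝ} (hδ : 0 < δ)
    (h : ∀ t, 0 ≤ t → t < δ → g t = m * t) : rightSlope g 0 = m := by
  have hd : HasDerivWithinAt (fun t : ℝ => m * t) m (Ici 0) 0 := by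
    simpa using ((hasDerivAt_id (0:ℝ)).const_mul m).hasDerivWithinAt
  have hev : g =ᶠ[nhdsWithin 0 (Ici 0)] (fun t : ℝ => m * t) := by
    filter_upwards [Ico_mem_nhdsGE_of_mem (by simp [hδ] : (0:ℝ) ∈ Ico (0:ℝ) δ)] with t ht
    exact h t ht.1 ht.2
  have hg : HasDerivWithinAt g m (Ici 0) 0 := by
    refine hd.congr_of_eventuallyEq hev ?_
    have := h 0 le_rfl hδ
    simpa using this
  exact hg.derivWithin (uniqueDiffOn_Ici 0 0 Set.self_mem_Ici)

lemma amplTop_eq_of_eventual {g : ℝ → ℝ} {τ k : ℝ} (h : ∀ t, k ≤ t → g t = t + τ) :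
    amplTop g = τ := by
  have ht : Filter.Tendsto (fun t => g t - t) Filter.atTop (nhds τ) := by
    refine Filter.Tendsto.congr' ?_ tendsto_const_nhds
    filter_upwards [Filter.eventually_ge_atTop k] with t hkt
    rw [h t hkt]; ring
  exact ht.limUnder_eq

-- ## Group-level notions

noncomputable def sl {G : Subgroup (Equiv.Perm ℝ)} (p : G) : ℝ :=
  rightSlope (⇑(p : Equiv.Perm ℝ)) 0

noncomputable def tp {G : Subgroup (Equiv.Perm ℝ)} (p : G) : ℝ :=
  amplTop (⇑(p : Equiv.Perm ℝ))

section GroupLevel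

variable {G : Subgroup (Equiv.Perm ℝ)} (hG : (G : Set (Equiv.Perm ℝ)) ⊆ PLo (Ici (0:ℝ)))

include hG

lemma mem_PLo (p : G) : (p : Equiv.Perm ℝ) ∈ PLo (Ici (0:ℝ)) := hG p.2

lemma sl_window (p : G) :
    0 < sl p ∧ ∃ δ : ℝ, 0 < δ ∧ ∀ t, 0 ≤ t → t < δ → (p : Equiv.Perm ℝ) t = sl p * t := by
  obtain ⟨m, δ, hm, hδ, hw⟩ := PLo.exists_window (mem_PLo hG p)
  have hsl : sl p = m := window_rightSlope hδ hw
  rw [hsl]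
  exact ⟨hm, δ, hδ, hw⟩

lemma sl_pos (p : G) : 0 < sl p := (sl_window hG p).1

omit hG in
lemma coe_mul_apply (p q : G) (t : ℝ) :
    ((p * q : G) : Equiv.Perm ℝ) t = (p : Equiv.Perm ℝ) ((q : Equiv.Perm ℝ) t) := rfl

lemma sl_mul (p q : G) : sl (p * q) = sl p * sl q := by
  obtain ⟨hmp, δp, hδp, hwp⟩ := sl_window hG p
  obtain ⟨hmq, δq, hδq, hwq⟩ := sl_window hG q
  have hw : ∀ t, 0 ≤ t → t < min δq (δp / sl q) → ((p * q : G) : Equiv.Perm ℝ) t = (sl p * sl q) * t := by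
    intro t ht0 htδ
    rw [coe_mul_apply p q, hwq t ht0 (lt_of_lt_of_le htδ (min_le_left _ _))]
    have h1 : sl q * t < δp := by
      have h2 : t < δp / sl q := lt_of_lt_of_le htδ (min_le_right _ _)
      rw [lt_div_iff₀ hmq] at h2
      linarith
    rw [hwp (sl q * t) (by positivity) h1]
    ring
  have hδ : 0 < min δq (δp / sl q) := lt_min hδq (by positivity)
  exact window_rightSlope hδ hw

omit hG in
lemma sl_one : sl (1 : G) = (1:ℝ) := by
  have hw : ∀ t : ℝ, 0 ≤ t → t < 1 → ((1 : G) : Equiv.Perm ℝ) t = 1 * t := by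
    intro t _ _
    simp
  exact window_rightSlope one_pos hw


lemma sl_inv (p : G) : sl p⁻¹ = (sl p)⁻¹ := by
  have h1 : sl p⁻¹ * sl p = 1 := by
    rw [← sl_mul hG, inv_mul_cancel]
    exact sl_one
  exact eq_inv_of_mul_eq_one_left h1

end GroupLevel

section TauLevel

variable {G : Subgroup (Equiv.Perm ℝ)}
  (htrans : ∀ g ∈ G, ∃ τ k : ℝ, ∀ t : ℝ, k ≤ t → g t = t + τ)

include htrans

lemma tp_spec (p : G) : ∃ k : ℝ, ∀ t, k ≤ t → (p : Equiv.Perm ℝ) t = t + tp p := by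
  obtain ⟨τ, k, h⟩ := htrans (p : Equiv.Perm ℝ) p.2
  have : tp p = τ := amplTop_eq_of_eventual h
  rw [this]
  exact ⟨k, h⟩

lemma tp_mul (p q : G) : tp (p * q) = tp p + tp q := by
  obtain ⟨kp, hp⟩ := tp_spec htrans p
  obtain ⟨kq, hq⟩ := tp_spec htrans q
  have hw : ∀ t, max kq (kp - tp q) ≤ t → ((p * q : G) : Equiv.Perm ℝ) t = t + (tp p + tp q) := by
    intro t ht
    rw [coe_mul_apply p q, hq t (le_trans (le_max_left _ _) ht)]
    rw [hp (t + tp q) (by linarith [le_trans (le_max_right _ _) ht])]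
    ring
  exact amplTop_eq_of_eventual hw

lemma tp_one : tp (1 : G) = 0 := by
  have hw : ∀ t : ℝ, (0:ℝ) ≤ t → ((1 : G) : Equiv.Perm ℝ) t = t + 0 := by
    intro t _
    simp
  exact amplTop_eq_of_eventual hw

lemma tp_inv (p : G) : tp p⁻¹ = -tp p := by
  have h1 : tp p⁻¹ + tp p = 0 := by
    rw [← tp_mul htrans, inv_mul_cancel]
    exact tp_one htrans
  linarith

end TauLevel

-- ## Orbit lemmas

lemma orbit_low {G : Subgroup (Equiv.Perm ℝ)} (hG : (G : Set (Equiv.Perm ℝ)) ⊆ PLo (Ici (0:ℝ)))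
    (hirr : ∀ t : ℝ, 0 < t → ∃ g ∈ G, g t ≠ t) {t0 Θ : ℝ} (ht0 : 0 < t0) (hΘ : 0 < Θ) :
    ∃ u : G, (u : Equiv.Perm ℝ) t0 < Θ := by
  by_contra hcon
  push_neg at hcon
  set O := (fun u : G => (u : Equiv.Perm ℝ) t0) '' Set.univ with hO
  have hne : O.Nonempty := ⟨((1:G) : Equiv.Perm ℝ) t0, ⟨(1:G), trivial, rfl⟩⟩
  have hbdd : BddBelow O := by
    refine ⟨Θ, fun y hy => ?_⟩
    obtain ⟨u, -, rfl⟩ := hy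
    exact hcon u
  set c := sInf O with hc
  have hcΘ : Θ ≤ c := le_csInf hne (fun y hy => by obtain ⟨u, -, rfl⟩ := hy; exact hcon u)
  have hcpos : 0 < c := lt_of_lt_of_le hΘ hcΘ
  have hfix : ∀ g : G, (g : Equiv.Perm ℝ) c = c := by
    intro g
    have hg : ∀ g : G, (g : Equiv.Perm ℝ) c ≥ c := by
      intro g
      have hmono : StrictMono ⇑(g : Equiv.Perm ℝ) := (hG g.2).1
      set e := StrictMono.orderIsoOfSurjective _ hmono (g : Equiv.Perm ℝ).surjective with he
      have him : e '' O ⊆ O := by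
        rintro y ⟨z, ⟨u, -, rfl⟩, rfl⟩
        exact ⟨g * u, trivial, rfl⟩
      have h1 : e c = sInf (e '' O) := by
        rw [hc]
        exact (OrderIso.map_csInf' e hne hbdd)
      have h2 : sInf O ≤ sInf (e '' O) :=
        csInf_le_csInf hbdd (hne.image e) him
      have h3 : (e : ℝ → ℝ) = ⇑(g : Equiv.Perm ℝ) := StrictMono.coe_orderIsoOfSurjective _ _ _
      calc c = sInf O := hc
        _ ≤ sInf (e '' O) := h2
        _ = e c := h1.symm
        _ = (g : Equiv.Perm ℝ) c := by rw [← h3]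
    have h4 := hg g
    have h5 := hg g⁻¹
    have h6 : (g : Equiv.Perm ℝ) (((g⁻¹ : G) : Equiv.Perm ℝ) c) ≥ (g : Equiv.Perm ℝ) c := by
      have hmono : StrictMono ⇑(g : Equiv.Perm ℝ) := (hG g.2).1
      exact hmono.monotone h5
    have h7 : (g : Equiv.Perm ℝ) (((g⁻¹ : G) : Equiv.Perm ℝ) c) = c := by
      rw [← coe_mul_apply g g⁻¹ c, mul_inv_cancel]
      rfl
    rw [h7] at h6
    linarith
  obtain ⟨g, hgG, hgne⟩ := hirr c hcpos
  exact hgne (hfix ⟨g, hgG⟩)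

lemma orbit_high {G : Subgroup (Equiv.Perm ℝ)} (hG : (G : Set (Equiv.Perm ℝ)) ⊆ PLo (Ici (0:ℝ)))
    (hirr : ∀ t : ℝ, 0 < t → ∃ g ∈ G, g t ≠ t) {t0 Θ : ℝ} (ht0 : 0 < t0) :
    ∃ u : G, Θ ≤ (u : Equiv.Perm ℝ) t0 := by
  by_contra hcon
  push_neg at hcon
  set O := (fun u : G => (u : Equiv.Perm ℝ) t0) '' Set.univ with hO
  have hne : O.Nonempty := ⟨((1:G) : Equiv.Perm ℝ) t0, ⟨(1:G), trivial, rfl⟩⟩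
  have hbdd : BddAbove O := by
    refine ⟨Θ, fun y hy => ?_⟩
    obtain ⟨u, -, rfl⟩ := hy
    exact (hcon u).le
  set c := sSup O with hc
  have hct0 : t0 ≤ c := le_csSup hbdd ⟨(1:G), trivial, rfl⟩
  have hcpos : 0 < c := lt_of_lt_of_le ht0 hct0
  have hfix : ∀ g : G, (g : Equiv.Perm ℝ) c = c := by
    intro g
    have hg : ∀ g : G, (g : Equiv.Perm ℝ) c ≤ c := by
      intro g
      have hmono : StrictMono ⇑(g : Equiv.Perm ℝ) := (hG g.2).1
      set e := StrictMono.orderIsoOfSurjective _ hmono (g : Equiv.Perm ℝ).surjective with he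
      have him : e '' O ⊆ O := by
        rintro y ⟨z, ⟨u, -, rfl⟩, rfl⟩
        exact ⟨g * u, trivial, rfl⟩
      have h1 : e c = sSup (e '' O) := by
        rw [hc]
        exact (OrderIso.map_csSup' e hne hbdd)
      have h2 : sSup (e '' O) ≤ sSup O :=
        csSup_le_csSup hbdd (hne.image e) him
      have h3 : (e : ℝ → ℝ) = ⇑(g : Equiv.Perm ℝ) := StrictMono.coe_orderIsoOfSurjective _ _ _
      calc (g : Equiv.Perm ℝ) c = e c := by rw [← h3]
        _ = sSup (e '' O) := h1
        _ ≤ sSup O := h2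
        _ = c := hc.symm
    have h4 := hg g
    have h5 := hg g⁻¹
    have h6 : (g : Equiv.Perm ℝ) (((g⁻¹ : G) : Equiv.Perm ℝ) c) ≤ (g : Equiv.Perm ℝ) c := by
      have hmono : StrictMono ⇑(g : Equiv.Perm ℝ) := (hG g.2).1
      exact hmono.monotone h5
    have h7 : (g : Equiv.Perm ℝ) (((g⁻¹ : G) : Equiv.Perm ℝ) c) = c := by
      rw [← coe_mul_apply g g⁻¹ c, mul_inv_cancel]
      rfl
    rw [h7] at h6
    linarith
  obtain ⟨g, hgG, hgne⟩ := hirr c hcpos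
  exact hgne (hfix ⟨g, hgG⟩)

-- ## the commutator

open scoped commutatorElement in
lemma exists_comm_moved {G : Subgroup (Equiv.Perm ℝ)} (hG : (G : Set (Equiv.Perm ℝ)) ⊆ PLo (Ici (0:ℝ)))
    (hna : ∃ g ∈ G, ∃ h ∈ G, g * h ≠ h * g) :
    ∃ b : G, (∃ p q : G, b = p * q * p⁻¹ * q⁻¹) ∧ ∃ t0 : ℝ, 0 < t0 ∧ (b : Equiv.Perm ℝ) t0 ≠ t0 := by
  obtain ⟨g, hg, h, hh, hne⟩ := hna
  set p : G := ⟨g, hg⟩ with hp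
  set q : G := ⟨h, hh⟩ with hq
  refine ⟨⁅p, q⁆, ⟨p, q, commutatorElement_def p q⟩, ?_⟩
  have hb1 : ⁅p, q⁆ ≠ 1 := by
    intro hcon
    have h2 : p * q = q * p := commutatorElement_eq_one_iff_mul_comm.mp hcon
    exact hne (congrArg Subtype.val h2)
  have hex : ∃ t0 : ℝ, ((⁅p, q⁆ : G) : Equiv.Perm ℝ) t0 ≠ t0 := by
    by_contra hall
    push_neg at hall
    have h3 : ((⁅p, q⁆ : G) : Equiv.Perm ℝ) = 1 := Equiv.ext hall
    exact hb1 (Subtype.ext h3)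
  obtain ⟨t0, ht0⟩ := hex
  refine ⟨t0, ?_, ht0⟩
  by_contra hle
  push_neg at hle
  rcases eq_or_lt_of_le hle with h | h
  · exact ht0 (h ▸ PLo.fix_zero (hG (⁅p, q⁆ : G).2))
  · exact ht0 (PLo.fix_neg (hG (⁅p, q⁆ : G).2) h)

-- ## Part 1 : chiL

theorem partChi (G : Subgroup (Equiv.Perm ℝ)) (hG : (G : Set (Equiv.Perm ℝ)) ⊆ PLo (Ici (0 : ℝ)))
    (hna : ∃ g ∈ G, ∃ h ∈ G, g * h ≠ h * g)
    (hirr : ∀ t : ℝ, 0 < t → ∃ g ∈ G, g t ≠ t)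
    (hex : ∃ g : G, chiL G 0 g ≠ 0) : ¬ MemSigma1 (chiL G 0) := by
  have hchi : ∀ v : G, chiL G 0 v = Real.log (sl v) := fun v => rfl
  have hreg : ∀ v : G, 0 ≤ chiL G 0 v → 1 ≤ sl v := by
    intro v hv
    rw [hchi] at hv
    by_contra hlt
    push_neg at hlt
    have := Real.log_neg (sl_pos hG v) hlt
    linarith
  -- the expanding element a
  obtain ⟨a, ha⟩ : ∃ a : G, 1 < sl a := by
    obtain ⟨g0, hg0⟩ := hex
    have hg0' : sl g0 ≠ 1 := by
      intro h
      apply hg0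
      rw [hchi, h, Real.log_one]
    rcases lt_or_gt_of_ne hg0' with hlt | hgt
    · refine ⟨g0⁻¹, ?_⟩
      rw [sl_inv hG]
      exact (one_lt_inv₀ (sl_pos hG g0)).mpr hlt
    · exact ⟨g0, hgt⟩
  obtain ⟨hspos, δ, hδ, hw⟩ := sl_window hG a
  set s := sl a with hs
  set Θ := s * δ with hΘ
  have hΘpos : 0 < Θ := by positivity
  have haw : ∀ t, 0 ≤ t → s * t < Θ → (a : Equiv.Perm ℝ) t = s * t := by
    intro t ht h2
    refine hw t ht ?_
    rw [hΘ] at h2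
    exact (mul_lt_mul_iff_right₀ hspos).mp h2
  -- powers of a
  have hslpow : ∀ m : ℕ, sl (a ^ m) = s ^ m := by
    intro m
    induction m with
    | zero => simpa using sl_one
    | succ n ih => rw [pow_succ, sl_mul hG, ih, pow_succ]
  have hpoww : ∀ m : ℕ, ∀ t, 0 ≤ t → s ^ m * t < Θ → ((a ^ m : G) : Equiv.Perm ℝ) t = s ^ m * t := by
    intro m
    induction m with
    | zero =>
      intro t ht _
      simp
    | succ n ih =>
      intro t ht hlt
      have h1 : (1:ℝ) ≤ s ^ n := one_le_pow₀ ha.le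
      have hst : s * t ≤ s ^ (n+1) * t := by
        have e : s ^ (n+1) * t = s ^ n * (s * t) := by ring
        rw [e]
        nlinarith [mul_nonneg hspos.le ht]
      have hxa : (a : Equiv.Perm ℝ) t = s * t := haw t ht (by linarith)
      have h2 : s ^ n * (s * t) < Θ := by
        have e : s ^ n * (s * t) = s ^ (n+1) * t := by ring
        rw [e]; exact hlt
      rw [pow_succ, coe_mul_apply, hxa, ih (s*t) (by positivity) h2]
      ring
  -- the generating set
  set X := {x : G | 1 < sl x ∧ ∀ t, 0 ≤ t → sl x * t < Θ → (x : Equiv.Perm ℝ) t = sl x * t} with hX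
  have haX : a ∈ X := ⟨ha, haw⟩
  have hgen : ∀ p : G, ∃ m : ℕ, (a ^ m * p) ∈ X := by
    intro p
    obtain ⟨hσ, δp, hδp, hwp⟩ := sl_window hG p
    obtain ⟨m, hm⟩ := pow_unbounded_of_one_lt (max (1 / sl p) (Θ / (sl p * δp))) ha
    have hm1 : 1 / sl p < s ^ m := lt_of_le_of_lt (le_max_left _ _) hm
    have hm2 : Θ / (sl p * δp) < s ^ m := lt_of_le_of_lt (le_max_right _ _) hm
    have hsm : (0:ℝ) < s ^ m := by positivity
    have hslx : sl (a ^ m * p) = s ^ m * sl p := by rw [sl_mul hG, hslpow]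
    refine ⟨m, ?_, ?_⟩
    · rw [hslx]
      rw [div_lt_iff₀ hσ] at hm1
      linarith
    · intro t ht hlt
      rw [hslx] at hlt ⊢
      rw [coe_mul_apply]
      have h5 : Θ < s ^ m * (sl p * δp) := (div_lt_iff₀ (by positivity)).mp hm2
      have h3 : t < δp := by
        by_contra h4
        push_neg at h4
        nlinarith
      rw [hwp t ht h3]
      have h6 : s ^ m * (sl p * t) < Θ := by
        have e : s ^ m * (sl p * t) = s ^ m * sl p * t := by ring
        rw [e]; exact hlt
      rw [hpoww m (sl p * t) (by positivity) h6]
      ring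
  have hXgen : Subgroup.closure X = ⊤ := by
    rw [Subgroup.eq_top_iff']
    intro p
    obtain ⟨m, hm⟩ := hgen p
    have h1 : a ∈ Subgroup.closure X := Subgroup.subset_closure haX
    have h2 : a ^ m ∈ Subgroup.closure X := pow_mem h1 m
    have h3 : (a ^ m * p) ∈ Subgroup.closure X := Subgroup.subset_closure hm
    have h4 : p = (a ^ m)⁻¹ * (a ^ m * p) := by group
    rw [h4]
    exact mul_mem (inv_mem h2) h3
  -- the target element
  obtain ⟨b, ⟨p0, q0, hbdef⟩, t0, ht0, hbt0⟩ := exists_comm_moved hG hna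
  have hp0 : sl p0 ≠ 0 := ne_of_gt (sl_pos hG p0)
  have hq0 : sl q0 ≠ 0 := ne_of_gt (sl_pos hG q0)
  have hslb : sl b = 1 := by
    rw [hbdef, sl_mul hG, sl_mul hG, sl_mul hG, sl_inv hG, sl_inv hG]
    field_simp
  obtain ⟨u, hu⟩ := orbit_low hG hirr ht0 hΘpos
  set ht := u * b * u⁻¹ with hhdef
  have hslu : sl u ≠ 0 := ne_of_gt (sl_pos hG u)
  have hslh : sl ht = 1 := by
    rw [hhdef, sl_mul hG, sl_mul hG, sl_inv hG, hslb]
    field_simp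
  set t1 := (u : Equiv.Perm ℝ) t0 with ht1def
  have ht1pos : 0 < t1 := by
    rw [ht1def]
    have h1 : (u : Equiv.Perm ℝ) 0 < (u : Equiv.Perm ℝ) t0 := (hG u.2).1 ht0
    rw [PLo.fix_zero (hG u.2)] at h1
    exact h1
  have huinv : ((u⁻¹ : G) : Equiv.Perm ℝ) t1 = t0 := by
    rw [ht1def, ← coe_mul_apply u⁻¹ u t0, inv_mul_cancel]
    rfl
  have hmoved : (ht : Equiv.Perm ℝ) t1 ≠ t1 := by
    have e1 : (ht : Equiv.Perm ℝ) t1 = (u : Equiv.Perm ℝ) ((b : Equiv.Perm ℝ) t0) := by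
      rw [hhdef, coe_mul_apply (u * b) u⁻¹, huinv, coe_mul_apply u b]
    rw [e1, ht1def]
    intro hcon
    exact hbt0 ((hG u.2).1.injective hcon)
  -- refutation
  intro hmem
  have hchain := hmem X hXgen 1 ht
    (by rw [hchi, sl_one, Real.log_one]) (by rw [hchi, hslh, Real.log_one])
  set P : G → Prop := fun v => ∀ t, 0 ≤ t → sl v * t < Θ → (v : Equiv.Perm ℝ) t = sl v * t with hPdef
  have hstep : ∀ v w : G, P v →
      (0 ≤ chiL G 0 v ∧ 0 ≤ chiL G 0 w ∧ ∃ x ∈ X, w = v * x ∨ v = w * x) → P w := by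
    rintro v w hPv ⟨hv0, hw0, x, hxX, hcase⟩
    have h1v : 1 ≤ sl v := hreg v hv0
    have h1w : 1 ≤ sl w := hreg w hw0
    obtain ⟨hx1, hxw⟩ := hxX
    have hxpos : 0 < sl x := sl_pos hG x
    rcases hcase with rfl | hvw
    · -- up-step
      intro t htt hlt
      have hslw : sl (v * x) = sl v * sl x := sl_mul hG v x
      rw [hslw] at hlt ⊢
      rw [coe_mul_apply]
      have hxt : sl x * t < Θ := by nlinarith
      rw [hxw t htt hxt]
      have h3 : sl v * (sl x * t) < Θ := by
        have e : sl v * (sl x * t) = sl v * sl x * t := by ring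
        rw [e]; exact hlt
      rw [hPv (sl x * t) (by positivity) h3]
      ring
    · -- down-step
      have hslv : sl v = sl w * sl x := by rw [hvw, sl_mul hG]
      intro t htt hlt
      have hwv : w = v * x⁻¹ := by rw [hvw]; group
      have htΘ : t < Θ := by nlinarith
      have hxinv : ((x⁻¹ : G) : Equiv.Perm ℝ) t = t / sl x := by
        have ht' : 0 ≤ t / sl x := div_nonneg htt hxpos.le
        have h2 : sl x * (t / sl x) = t := by field_simp
        have hxtp : (x : Equiv.Perm ℝ) (t / sl x) = t := by
          rw [hxw _ ht' (by rw [h2]; exact htΘ), h2]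
        have hxinv_coe : ((x⁻¹ : G) : Equiv.Perm ℝ) = ((x : G) : Equiv.Perm ℝ)⁻¹ := rfl
        rw [hxinv_coe]
        conv_lhs => rw [← hxtp]
        exact Equiv.symm_apply_apply _ _
      have hcoe : (w : Equiv.Perm ℝ) t = (v : Equiv.Perm ℝ) (((x⁻¹ : G) : Equiv.Perm ℝ) t) := by
        conv_lhs => rw [hwv]
        exact coe_mul_apply v x⁻¹ t
      have h4 : sl v * (t / sl x) = sl w * t := by
        rw [hslv]
        field_simp
      have h5 : sl v * (t / sl x) < Θ := by rw [h4]; exact hlt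
      rw [hcoe, hxinv, hPv (t / sl x) (div_nonneg htt hxpos.le) h5, h4]
  have hP : ∀ w : G, Relation.ReflTransGen
      (fun u v : G => 0 ≤ chiL G 0 u ∧ 0 ≤ chiL G 0 v ∧ ∃ x ∈ X, v = u * x ∨ u = v * x) 1 w → P w := by
    intro w hw
    induction hw with
    | refl =>
      intro t htt hlt
      have e1 : ((1 : G) : Equiv.Perm ℝ) t = t := rfl
      rw [e1, sl_one, one_mul]
    | tail hab hbc ih => exact hstep _ _ ih hbc
  have hfin := hP ht hchain t1 ht1pos.le (by rw [hslh, one_mul]; exact hu)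
  rw [hslh, one_mul] at hfin
  exact hmoved hfin

-- ## Part 2 : -tau

theorem partTau (G : Subgroup (Equiv.Perm ℝ)) (hG : (G : Set (Equiv.Perm ℝ)) ⊆ PLo (Ici (0 : ℝ)))
    (hna : ∃ g ∈ G, ∃ h ∈ G, g * h ≠ h * g)
    (hirr : ∀ t : ℝ, 0 < t → ∃ g ∈ G, g t ≠ t)
    (htrans : ∀ g ∈ G, ∃ τ k : ℝ, ∀ t : ℝ, k ≤ t → g t = t + τ)
    (hex : ∃ g : G, amplTop (⇑(g : Equiv.Perm ℝ)) ≠ 0) :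
    ¬ MemSigma1 (fun g : G => -amplTop (⇑(g : Equiv.Perm ℝ))) := by
  have hchi : ∀ v : G, (fun g : G => -amplTop (⇑(g : Equiv.Perm ℝ))) v = -tp v := fun v => rfl
  have hreg : ∀ v : G, 0 ≤ (fun g : G => -amplTop (⇑(g : Equiv.Perm ℝ))) v → tp v ≤ 0 := by
    intro v hv
    rw [hchi] at hv
    linarith
  -- the descending element a
  obtain ⟨a, ha⟩ : ∃ a : G, tp a < 0 := by
    obtain ⟨g0, hg0⟩ := hex
    have hg0' : tp g0 ≠ 0 := hg0
    rcases lt_or_gt_of_ne hg0' with hlt | hgt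
    · exact ⟨g0, hlt⟩
    · refine ⟨g0⁻¹, ?_⟩
      rw [tp_inv htrans]
      linarith
  obtain ⟨Θ, hΘw⟩ := tp_spec htrans a
  have haw : ∀ t, Θ ≤ t → (a : Equiv.Perm ℝ) t = t + tp a := hΘw
  -- powers of a
  have htppow : ∀ m : ℕ, tp (a ^ m) = m * tp a := by
    intro m
    induction m with
    | zero => simpa using tp_one htrans
    | succ n ih =>
      rw [pow_succ, tp_mul htrans, ih]
      push_cast
      ring
  have hpoww : ∀ m : ℕ, ∀ t, Θ - m * tp a ≤ t → ((a ^ m : G) : Equiv.Perm ℝ) t = t + m * tp a := by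
    intro m
    induction m with
    | zero =>
      intro t _
      have e1 : ((1 : G) : Equiv.Perm ℝ) t = t := rfl
      simp [e1]
    | succ n ih =>
      intro t hΘt
      have hn : (0:ℝ) ≤ n := Nat.cast_nonneg n
      have hcast : ((n:ℝ) + 1) * tp a = n * tp a + tp a := by ring
      have h1 : Θ ≤ t := by
        have : (0:ℝ) ≤ -((n:ℝ)+1) * tp a := by nlinarith
        push_cast at hΘt
        nlinarith
      rw [pow_succ, coe_mul_apply, haw t h1]
      have h2 : Θ - n * tp a ≤ t + tp a := by
        push_cast at hΘt
        nlinarith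
      rw [ih (t + tp a) h2]
      push_cast
      ring
  -- the generating set
  set X := {x : G | tp x < 0 ∧ ∀ t, Θ - tp x ≤ t → (x : Equiv.Perm ℝ) t = t + tp x} with hX
  have haX : a ∈ X := by
    refine ⟨ha, fun t h1 => haw t (by linarith)⟩
  have hgen : ∀ p : G, ∃ m : ℕ, (a ^ m * p) ∈ X := by
    intro p
    obtain ⟨kp, hkp⟩ := tp_spec htrans p
    obtain ⟨m, hm⟩ := exists_nat_gt (max (tp p) (kp - Θ + tp p) / (-tp a))
    have hapos : 0 < -tp a := by linarith
    have hm' : max (tp p) (kp - Θ + tp p) < m * (-tp a) := by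
      rw [div_lt_iff₀ hapos] at hm
      exact hm
    have hm1 : tp p < m * (-tp a) := lt_of_le_of_lt (le_max_left _ _) hm'
    have hm2 : kp - Θ + tp p < m * (-tp a) := lt_of_le_of_lt (le_max_right _ _) hm'
    have hslx : tp (a ^ m * p) = tp p + m * tp a := by
      rw [tp_mul htrans, htppow]
      ring
    refine ⟨m, ?_, ?_⟩
    · rw [hslx]; nlinarith
    · intro t htt
      rw [hslx] at htt ⊢
      have h1 : kp ≤ t := by nlinarith
      rw [coe_mul_apply, hkp t h1]
      have h2 : Θ - m * tp a ≤ t + tp p := by nlinarith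
      rw [hpoww m (t + tp p) h2]
      ring
  have hXgen : Subgroup.closure X = ⊤ := by
    rw [Subgroup.eq_top_iff']
    intro p
    obtain ⟨m, hm⟩ := hgen p
    have h1 : a ∈ Subgroup.closure X := Subgroup.subset_closure haX
    have h2 : a ^ m ∈ Subgroup.closure X := pow_mem h1 m
    have h3 : (a ^ m * p) ∈ Subgroup.closure X := Subgroup.subset_closure hm
    have h4 : p = (a ^ m)⁻¹ * (a ^ m * p) := by group
    rw [h4]
    exact mul_mem (inv_mem h2) h3
  -- the target element
  obtain ⟨b, ⟨p0, q0, hbdef⟩, t0, ht0, hbt0⟩ := exists_comm_moved hG hna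
  have htpb : tp b = 0 := by
    rw [hbdef, tp_mul htrans, tp_mul htrans, tp_mul htrans, tp_inv htrans, tp_inv htrans]
    ring
  obtain ⟨u, hu⟩ := orbit_high hG hirr (Θ := Θ) ht0
  set hh := u * b * u⁻¹ with hhdef
  have htph : tp hh = 0 := by
    rw [hhdef, tp_mul htrans, tp_mul htrans, tp_inv htrans, htpb]
    ring
  set t1 := (u : Equiv.Perm ℝ) t0 with ht1def
  have huinv : ((u⁻¹ : G) : Equiv.Perm ℝ) t1 = t0 := by
    rw [ht1def, ← coe_mul_apply u⁻¹ u t0, inv_mul_cancel]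
    rfl
  have hmoved : (hh : Equiv.Perm ℝ) t1 ≠ t1 := by
    have e1 : (hh : Equiv.Perm ℝ) t1 = (u : Equiv.Perm ℝ) ((b : Equiv.Perm ℝ) t0) := by
      rw [hhdef, coe_mul_apply (u * b) u⁻¹, huinv, coe_mul_apply u b]
    rw [e1, ht1def]
    intro hcon
    exact hbt0 ((hG u.2).1.injective hcon)
  -- refutation
  intro hmem
  have hchain := hmem X hXgen 1 hh
    (by
      have : tp (1 : G) = 0 := tp_one htrans
      rw [hchi, this]
      simp)
    (by rw [hchi, htph]; simp)
  set P : G → Prop := fun v => ∀ t, Θ - tp v ≤ t → (v : Equiv.Perm ℝ) t = t + tp v with hPdef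
  have hstep : ∀ v w : G, P v →
      (0 ≤ -amplTop (⇑((v : G) : Equiv.Perm ℝ)) ∧ 0 ≤ -amplTop (⇑((w : G) : Equiv.Perm ℝ)) ∧
        ∃ x ∈ X, w = v * x ∨ v = w * x) → P w := by
    rintro v w hPv ⟨hv0, hw0, x, hxX, hcase⟩
    have h1v : tp v ≤ 0 := hreg v hv0
    have h1w : tp w ≤ 0 := hreg w hw0
    obtain ⟨hx1, hxw⟩ := hxX
    rcases hcase with rfl | hvw
    · -- up-step
      intro t htt
      have hslw : tp (v * x) = tp v + tp x := tp_mul htrans v x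
      rw [hslw] at htt ⊢
      have hxt : Θ - tp x ≤ t := by linarith
      rw [coe_mul_apply, hxw t hxt]
      have h3 : Θ - tp v ≤ t + tp x := by linarith
      rw [hPv (t + tp x) h3]
      ring
    · -- down-step
      have hslv : tp v = tp w + tp x := by rw [hvw, tp_mul htrans]
      intro t htt
      have htΘ : Θ ≤ t := by linarith
      have hxinv : ((x⁻¹ : G) : Equiv.Perm ℝ) t = t - tp x := by
        have hxtp : (x : Equiv.Perm ℝ) (t - tp x) = t := by
          rw [hxw _ (by linarith)]
          ring
        have hxinv_coe : ((x⁻¹ : G) : Equiv.Perm ℝ) = ((x : G) : Equiv.Perm ℝ)⁻¹ := rfl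
        rw [hxinv_coe]
        conv_lhs => rw [← hxtp]
        exact Equiv.symm_apply_apply _ _
      have hcoe : (w : Equiv.Perm ℝ) t = (v : Equiv.Perm ℝ) (((x⁻¹ : G) : Equiv.Perm ℝ) t) := by
        have hwv : w = v * x⁻¹ := by rw [hvw]; group
        conv_lhs => rw [hwv]
        exact coe_mul_apply v x⁻¹ t
      have h5 : Θ - tp v ≤ t - tp x := by linarith
      rw [hcoe, hxinv, hPv (t - tp x) h5, hslv]
      ring
  have hP : ∀ w : G, Relation.ReflTransGen
      (fun u v : G => 0 ≤ -amplTop (⇑((u : G) : Equiv.Perm ℝ)) ∧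
        0 ≤ -amplTop (⇑((v : G) : Equiv.Perm ℝ)) ∧ ∃ x ∈ X, v = u * x ∨ u = v * x) 1 w → P w := by
    intro w hw
    induction hw with
    | refl =>
      intro t _
      have e1 : ((1 : G) : Equiv.Perm ℝ) t = t := rfl
      have e2 : tp (1 : G) = 0 := tp_one htrans
      rw [e1, e2]
      ring
    | tail hab hbc ih => exact hstep _ _ ih hbc
  have hfin := hP hh hchain t1 (by rw [htph]; simpa using hu)
  rw [htph] at hfin
  rw [add_zero] at hfin
  exact hmoved hfin

/-- **Proposition (Statement 16).** Let `G ≤ PL_o([0,∞[)` be non-abelian and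
irreducible, with every element of `im ρ` a translation, and let `τ_r` send `g` to
the amplitude of `ρ(g)`. If `χ_ℓ` is non-zero then `[χ_ℓ] ∉ Σ¹(G)`; if `τ_r` is
non-zero then `[−τ_r] ∉ Σ¹(G)`. -/
theorem chiL_negTauR_not_memSigma1_half_line
    (G : Subgroup (Equiv.Perm ℝ)) (hG : (G : Set (Equiv.Perm ℝ)) ⊆ PLo (Ici (0 : ℝ)))
    (hna : ∃ g ∈ G, ∃ h ∈ G, g * h ≠ h * g)
    (hirr : ∀ t : ℝ, 0 < t → ∃ g ∈ G, g t ≠ t)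
    (htrans : ∀ g ∈ G, ∃ τ k : ℝ, ∀ t : ℝ, k ≤ t → g t = t + τ) :
    ((∃ g : G, chiL G 0 g ≠ 0) → ¬ MemSigma1 (chiL G 0)) ∧
    ((∃ g : G, amplTop (⇑(g : Equiv.Perm ℝ)) ≠ 0) →
      ¬ MemSigma1 (fun g : G => -amplTop (⇑(g : Equiv.Perm ℝ)))) := by
  exact ⟨partChi G hG hna hirr, partTau G hG hna hirr htrans⟩
end

section
/- Let G be a non-abelian, irreducible subgroup of PL_o(ℝ) such that every element of im λ ∪ im ρ is a translation, and let τ_ℓ, τ_r : G → ℝ send g to the amplitudes of the translations λ(g) and ρ(g), respectively. If τ_ℓ is non-zero then [τ_ℓ] ∉ Σ¹(G); similarly, if τ_r is non-zero then [−τ_r] ∉ Σ¹(G). -/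
open Set

theorem amplBot_eq (f : ℝ → ℝ) (τ k : ℝ) (h : ∀ t ≤ k, f t = t + τ) : amplBot f = τ := by
  have hev : (fun t => f t - t) =ᶠ[Filter.atBot] fun _ => τ := by
    filter_upwards [Filter.eventually_le_atBot k] with t ht
    rw [h t ht]; ring
  exact ((tendsto_const_nhds (α := ℝ)).congr' hev.symm).limUnder_eq

theorem amplTop_eq (f : ℝ → ℝ) (τ k : ℝ) (h : ∀ t, k ≤ t → f t = t + τ) : amplTop f = τ := by
  have hev : (fun t => f t - t) =ᶠ[Filter.atTop] fun _ => τ := by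
    filter_upwards [Filter.eventually_ge_atTop k] with t ht
    rw [h t ht]; ring
  exact ((tendsto_const_nhds (α := ℝ)).congr' hev.symm).limUnder_eq

theorem memSigma1_of_comp {Γ Δ : Type*} [Group Γ] [Group Δ] (e : Γ ≃* Δ) (ψ : Δ → ℝ)
    (h : MemSigma1 (fun g => ψ (e g))) : MemSigma1 ψ := by
  intro X hX
  have hX' : Subgroup.closure (⇑e ⁻¹' X) = ⊤ := by
    apply Subgroup.map_injective (f := e.toMonoidHom) e.injective
    rw [MonoidHom.map_closure, MulEquiv.coe_toMonoidHom,
      Set.image_preimage_eq X e.surjective, hX,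
      Subgroup.map_top_of_surjective _ e.surjective]
  intro g hgoal hg hh
  have hpath := h (⇑e ⁻¹' X) hX' (e.symm g) (e.symm hgoal)
    (by simpa using hg) (by simpa using hh)
  have hstep : ∀ u v : Γ,
      (0 ≤ ψ (e u) ∧ 0 ≤ ψ (e v) ∧ ∃ x ∈ ⇑e ⁻¹' X, v = u * x ∨ u = v * x) →
      (0 ≤ ψ (e u) ∧ 0 ≤ ψ (e v) ∧ ∃ x ∈ X, e v = e u * x ∨ e u = e v * x) := by
    rintro u v ⟨h1, h2, x, hx, hcase⟩
    refine ⟨h1, h2, e x, hx, ?_⟩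
    rcases hcase with rfl | rfl
    · left; simp [map_mul]
    · right; simp [map_mul]
  have hmapped := Relation.ReflTransGen.lift
    (p := fun u v : Δ => 0 ≤ ψ u ∧ 0 ≤ ψ v ∧ ∃ x ∈ X, v = u * x ∨ u = v * x)
    (⇑e) hstep _ _ hpath
  simpa [Function.onFun] using hmapped

theorem coreAux (G : Subgroup (Equiv.Perm ℝ))
    (hmono : ∀ g ∈ G, StrictMono ⇑g)
    (χ : G → ℝ)
    (hχ : ∀ g : G, ∃ k, ∀ t ≤ k, (g : Equiv.Perm ℝ) t = t + χ g)
    (hna : ∃ g ∈ G, ∃ h ∈ G, g * h ≠ h * g)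
    (hirr : ∀ t : ℝ, ∃ g ∈ G, g t ≠ t)
    (hne : ∃ g : G, χ g ≠ 0) :
    ¬ MemSigma1 χ := by
  intro hM
  -- χ is a character
  have hone : χ 1 = 0 := by
    obtain ⟨k, hk⟩ := hχ 1
    have h1 := hk k le_rfl
    simp only [OneMemClass.coe_one, Equiv.Perm.coe_one, id_eq] at h1
    linarith
  have hadd : ∀ u v : G, χ (u * v) = χ u + χ v := by
    intro u v
    obtain ⟨k1, h1⟩ := hχ u
    obtain ⟨k2, h2⟩ := hχ v
    obtain ⟨k3, h3⟩ := hχ (u * v)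
    set t := min k3 (min k2 (k1 - χ v)) with ht
    have e1 : ((u * v : G) : Equiv.Perm ℝ) t = t + χ (u * v) := h3 t (min_le_left _ _)
    have e2 : ((u * v : G) : Equiv.Perm ℝ) t = t + χ v + χ u := by
      have hc : ((u * v : G) : Equiv.Perm ℝ) t = (u : Equiv.Perm ℝ) ((v : Equiv.Perm ℝ) t) := by
        simp [Equiv.Perm.mul_apply]
      rw [hc, h2 t (le_trans (min_le_right _ _) (min_le_left _ _)),
        h1 (t + χ v) (by
          have := le_trans (min_le_right k3 (min k2 (k1 - χ v))) (min_le_right _ _)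
          linarith)]
    linarith
  have hinv : ∀ u : G, χ u⁻¹ = - χ u := by
    intro u
    have h1 := hadd u u⁻¹
    rw [mul_inv_cancel, hone] at h1
    linarith
  -- choose a with positive amplitude
  obtain ⟨g₀, hg₀⟩ := hne
  obtain ⟨a, hτ⟩ : ∃ a : G, 0 < χ a := by
    rcases lt_or_gt_of_ne hg₀ with h | h
    · exact ⟨g₀⁻¹, by rw [hinv]; linarith⟩
    · exact ⟨g₀, h⟩
  obtain ⟨t₀, ha⟩ := hχ a
  set τ := χ a with hτdef
  have powA : ∀ (n : ℕ) (t : ℝ), t + n * τ ≤ t₀ + τ → ((a : Equiv.Perm ℝ) ^ n) t = t + n * τ := by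
    intro n
    induction n with
    | zero => intro t _; simp
    | succ n ih =>
      intro t htle
      push_cast at htle
      have hn : (0:ℝ) ≤ (n:ℝ) := n.cast_nonneg
      have hnt : (0:ℝ) ≤ (n:ℝ) * τ := mul_nonneg hn hτ.le
      have h1 : t ≤ t₀ := by linarith
      rw [pow_succ, Equiv.Perm.mul_apply, ha t h1, ih (t + τ) (by push_cast; linarith)]
      push_cast; ring
  have hainv : ∀ t, t ≤ t₀ + τ → ((a : Equiv.Perm ℝ))⁻¹ t = t - τ := by
    intro t htle
    have h1 : (a : Equiv.Perm ℝ) (t - τ) = t := by rw [ha (t - τ) (by linarith)]; ring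
    rw [Equiv.Perm.inv_def, Equiv.symm_apply_eq, h1]
  have powB : ∀ (n : ℕ) (t : ℝ), t ≤ t₀ + τ → (((a : Equiv.Perm ℝ))⁻¹ ^ n) t = t - n * τ := by
    intro n
    induction n with
    | zero => intro t _; simp
    | succ n ih =>
      intro t htle
      have hn : (0:ℝ) ≤ (n:ℝ) * τ := mul_nonneg n.cast_nonneg hτ.le
      rw [pow_succ', Equiv.Perm.mul_apply, ih t htle, hainv (t - n * τ) (by linarith)]
      push_cast; ring
  have hzpow : ∀ m : ℤ, χ (a ^ m) = m * τ := by
    intro m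
    induction m using Int.induction_on with
    | zero => simpa using hone
    | succ n ih => rw [zpow_add_one, hadd, ih]; push_cast; ring
    | pred n ih => rw [zpow_sub_one, hadd, ih, hinv]; push_cast; ring
  set X : Set G := {x : G | ∀ t ≤ t₀, (x : Equiv.Perm ℝ) t = t + χ x} with hXdef
  have haX : a ∈ X := fun t htle => ha t htle
  have hXgen : Subgroup.closure X = ⊤ := by
    rw [eq_top_iff]
    rintro g -
    have hac : a ∈ Subgroup.closure X := Subgroup.subset_closure haX
    set m : ℤ := ⌊χ g / τ⌋ with hm
    set g' : G := g * a ^ (-m) with hg'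
    have hc' : 0 ≤ χ g' ∧ χ g' < τ := by
      have h1 : χ g' = χ g - m * τ := by
        rw [hg', hadd, hzpow]; push_cast; ring
      have h2 : (m : ℝ) * τ ≤ χ g := by
        have := Int.floor_le (χ g / τ)
        rw [le_div_iff₀ hτ] at this
        exact this
      have h3 : χ g < ((m : ℝ) + 1) * τ := by
        have := Int.lt_floor_add_one (χ g / τ)
        rw [div_lt_iff₀ hτ] at this
        push_cast at this ⊢
        linarith
      constructor <;> [linarith; linarith]
    obtain ⟨k', hk'⟩ := hχ g'
    obtain ⟨n, hn⟩ := exists_nat_ge ((t₀ - k') / τ)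
    have hnτ : t₀ - n * τ ≤ k' := by
      rw [div_le_iff₀ hτ] at hn
      linarith
    set y : G := a ^ n * g' * (a ^ n)⁻¹ with hy
    have hyχ : χ y = χ g' := by rw [hy, hadd, hadd, hinv]; ring
    have hyX : y ∈ X := by
      intro t htle
      have hcoe : ((y : G) : Equiv.Perm ℝ) t
          = ((a : Equiv.Perm ℝ) ^ n) ((g' : Equiv.Perm ℝ) ((((a : Equiv.Perm ℝ)) ^ n)⁻¹ t)) := by
        rw [hy]
        push_cast
        simp [Equiv.Perm.mul_apply]
      have h1 : (((a : Equiv.Perm ℝ)) ^ n)⁻¹ t = t - n * τ := by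
        rw [← inv_pow]; exact powB n t (by linarith)
      have h2 : t - n * τ ≤ k' := by linarith
      have h3 : (g' : Equiv.Perm ℝ) (t - n * τ) = t - n * τ + χ g' := hk' _ h2
      have h4 : ((a : Equiv.Perm ℝ) ^ n) (t - n * τ + χ g') = t - n * τ + χ g' + n * τ :=
        powA n _ (by have := hc'.2; linarith)
      rw [hcoe, h1, h3, h4, hyχ]; ring
    have hgdec : g = (a ^ n)⁻¹ * y * a ^ n * a ^ m := by
      rw [hy, hg']; group
    rw [hgdec]
    exact mul_mem (mul_mem (mul_mem (inv_mem (pow_mem hac n)) (Subgroup.subset_closure hyX))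
      (pow_mem hac n)) (zpow_mem hac m)
  -- the invariant
  set I : G → Prop := fun u => ∀ t ≤ t₀ - χ u, (u : Equiv.Perm ℝ) t = t + χ u with hIdef
  have hstep : ∀ u v : G, 0 ≤ χ u → 0 ≤ χ v →
      (∃ x ∈ X, v = u * x ∨ u = v * x) → I u → I v := by
    rintro u v hu hv ⟨x, hxX, hcase⟩ hIu
    rcases hcase with rfl | rfl
    · intro t htle
      have hχv : χ (u * x) = χ u + χ x := hadd u x
      have ht₀ : t ≤ t₀ := by linarith
      have hx1 : (x : Equiv.Perm ℝ) t = t + χ x := hxX t ht₀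
      have h2 : t + χ x ≤ t₀ - χ u := by linarith
      have hc : ((u * x : G) : Equiv.Perm ℝ) t = (u : Equiv.Perm ℝ) ((x : Equiv.Perm ℝ) t) := by
        simp [Equiv.Perm.mul_apply]
      rw [hc, hx1, hIu _ h2, hχv]; ring
    · intro t htle
      have hχu : χ (v * x) = χ v + χ x := hadd v x
      have hs1 : t - χ x ≤ t₀ - χ (v * x) := by linarith
      have hs2 : t - χ x ≤ t₀ := by linarith
      have hxs : (x : Equiv.Perm ℝ) (t - χ x) = t := by rw [hxX _ hs2]; ring
      have h3 : ((v * x : G) : Equiv.Perm ℝ) (t - χ x) = t - χ x + χ (v * x) := hIu _ hs1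
      have hc : ((v * x : G) : Equiv.Perm ℝ) (t - χ x)
          = (v : Equiv.Perm ℝ) ((x : Equiv.Perm ℝ) (t - χ x)) := by
        simp [Equiv.Perm.mul_apply]
      rw [hc, hxs] at h3
      rw [h3, hχu]; ring
  have hI : ∀ h : G, 0 ≤ χ h → I h := by
    intro h hh
    have hone' : (0:ℝ) ≤ χ 1 := by rw [hone]
    have hpath := hM X hXgen 1 h hone' hh
    have hI1 : I 1 := by
      intro t htle
      simp only [OneMemClass.coe_one, Equiv.Perm.coe_one, id_eq, hone]
      ring
    clear hh
    induction hpath with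
    | refl => exact hI1
    | tail p e ih => exact hstep _ _ e.1 e.2.1 e.2.2 ih
  -- endgame
  by_cases hker : ∀ n : G, χ n = 0 → n = 1
  · obtain ⟨gp, hgp, hp, hhp, hne'⟩ := hna
    apply hne'
    have hc : χ ((⟨gp, hgp⟩ : G) * ⟨hp, hhp⟩ * ((⟨hp, hhp⟩ : G) * ⟨gp, hgp⟩)⁻¹) = 0 := by
      rw [hadd, hinv, hadd, hadd]; ring
    have h1 := hker _ hc
    rw [mul_inv_eq_one] at h1
    have := congrArg Subtype.val h1
    simpa using this
  · push_neg at hker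
    obtain ⟨n₀, hn₀χ, hn₀⟩ := hker
    obtain ⟨s₀, hs₀⟩ : ∃ s, (n₀ : Equiv.Perm ℝ) s ≠ s := by
      by_contra hcon
      push_neg at hcon
      exact hn₀ (Subtype.ext (Equiv.ext hcon))
    set S := {t : ℝ | ∀ n : G, χ n = 0 → ∀ s ≤ t, (n : Equiv.Perm ℝ) s = s} with hSdef
    have hSne : t₀ ∈ S := by
      intro n hn s hs
      have := hI n (le_of_eq hn.symm) s (by rw [hn]; simpa)
      rw [hn] at this
      linarith
    have hSbdd : BddAbove S := by
      refine ⟨s₀, fun t ht => ?_⟩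
      by_contra hlt
      push_neg at hlt
      exact hs₀ (ht n₀ hn₀χ s₀ hlt.le)
    set Q := sSup S with hQ
    have hQS : ∀ s < Q, ∀ n : G, χ n = 0 → (n : Equiv.Perm ℝ) s = s := by
      intro s hs n hn
      obtain ⟨t, htS, hst⟩ := exists_lt_of_lt_csSup ⟨t₀, hSne⟩ hs
      exact htS n hn s hst.le
    have hfix : ∀ g : G, (g : Equiv.Perm ℝ) Q ≤ Q := by
      intro g
      by_contra hlt
      push_neg at hlt
      have hmem : (Q + (g : Equiv.Perm ℝ) Q) / 2 ∈ S := by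
        intro n hn s hs
        have hslt : s < (g : Equiv.Perm ℝ) Q := by linarith
        have hm := hmono _ g.2
        have h1 : ((g : Equiv.Perm ℝ))⁻¹ s < Q := by
          have h2 : (g : Equiv.Perm ℝ) (((g : Equiv.Perm ℝ))⁻¹ s) < (g : Equiv.Perm ℝ) Q := by
            rwa [Equiv.Perm.coe_inv, Equiv.apply_symm_apply]
          exact hm.lt_iff_lt.mp h2
        have hχc : χ (g⁻¹ * n * g) = 0 := by rw [hadd, hadd, hinv, hn]; ring
        have h2 := hQS _ h1 (g⁻¹ * n * g) hχc
        have h3 : ((g : Equiv.Perm ℝ))⁻¹ ((n : Equiv.Perm ℝ)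
            ((g : Equiv.Perm ℝ) (((g : Equiv.Perm ℝ))⁻¹ s))) = ((g : Equiv.Perm ℝ))⁻¹ s := by
          simpa [Equiv.Perm.mul_apply] using h2
        rw [Equiv.Perm.coe_inv, Equiv.apply_symm_apply] at h3
        exact (Equiv.injective _) h3
      have := le_csSup hSbdd hmem
      linarith
    obtain ⟨g, hgG, hgQ⟩ := hirr Q
    apply hgQ
    have h1 := hfix ⟨g, hgG⟩
    have h2 := hfix (⟨g, hgG⟩ : G)⁻¹
    have hm := hmono g hgG
    have h3 : Q ≤ g Q := by
      have h4 : g ((⟨g, hgG⟩ : G)⁻¹.val Q) ≤ g Q := hm.monotone h2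
      have h5 : ((⟨g, hgG⟩ : G)⁻¹).val = g⁻¹ := rfl
      rw [h5, Equiv.Perm.coe_inv, Equiv.apply_symm_apply] at h4
      exact h4
    exact le_antisymm h1 h3

/-- **Proposition (Statement 18).** Let `G ≤ PL_o(ℝ)` be non-abelian and irreducible,
with every element of `im λ ∪ im ρ` a translation, and let `τ_ℓ`, `τ_r` send `g` to
the amplitudes of `λ(g)`, `ρ(g)`. If `τ_ℓ` is non-zero then `[τ_ℓ] ∉ Σ¹(G)`; if
`τ_r` is non-zero then `[−τ_r] ∉ Σ¹(G)`. -/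
theorem tauL_negTauR_not_memSigma1_line
    (G : Subgroup (Equiv.Perm ℝ)) (hG : (G : Set (Equiv.Perm ℝ)) ⊆ PLo (univ : Set ℝ))
    (hna : ∃ g ∈ G, ∃ h ∈ G, g * h ≠ h * g)
    (hirr : ∀ t : ℝ, ∃ g ∈ G, g t ≠ t)
    (htrans : ∀ g ∈ G, (∃ τ k : ℝ, ∀ t : ℝ, t ≤ k → g t = t + τ) ∧
        (∃ τ k : ℝ, ∀ t : ℝ, k ≤ t → g t = t + τ)) :
    ((∃ g : G, amplBot (⇑(g : Equiv.Perm ℝ)) ≠ 0) →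
      ¬ MemSigma1 (fun g : G => amplBot (⇑(g : Equiv.Perm ℝ)))) ∧
    ((∃ g : G, amplTop (⇑(g : Equiv.Perm ℝ)) ≠ 0) →
      ¬ MemSigma1 (fun g : G => -amplTop (⇑(g : Equiv.Perm ℝ)))) := by
  have hmono : ∀ g ∈ G, StrictMono ⇑g := fun g hg => (hG hg).1
  constructor
  · rintro ⟨g, hg⟩ hM
    refine coreAux G hmono _ ?_ hna hirr ⟨g, hg⟩ hM
    intro u
    obtain ⟨⟨τ, k, hk⟩, -⟩ := htrans ↑u u.2
    refine ⟨k, fun t ht => ?_⟩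
    rw [amplBot_eq (⇑(u : Equiv.Perm ℝ)) τ k hk]
    exact hk t ht
  · rintro ⟨g0, hg0⟩ hM
    set ρ : Equiv.Perm ℝ := Equiv.neg ℝ with hρ
    set c : Equiv.Perm ℝ ≃* Equiv.Perm ℝ := MulAut.conj ρ with hcdef
    have hcapp : ∀ (p : Equiv.Perm ℝ) (t : ℝ), (c.toMonoidHom p) t = -(p (-t)) := by
      intro p t
      simp [hcdef, hρ, MulAut.conj_apply, Equiv.Perm.mul_apply, Equiv.Perm.inv_def]
    set G' := Subgroup.map c.toMonoidHom G with hG'def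
    set φ : G ≃* G' := Subgroup.equivMapOfInjective G c.toMonoidHom c.injective with hφdef
    set ψ : G' → ℝ := fun g' => amplBot (⇑(g' : Equiv.Perm ℝ)) with hψdef
    have hmono' : ∀ g' ∈ G', StrictMono ⇑g' := by
      rintro g' hg'
      obtain ⟨p, hpG, rfl⟩ := Subgroup.mem_map.mp hg'
      intro s t hst
      rw [hcapp, hcapp]
      exact neg_lt_neg ((hmono p hpG) (neg_lt_neg hst))
    have hχ' : ∀ g' : G', ∃ k, ∀ t ≤ k, (g' : Equiv.Perm ℝ) t = t + ψ g' := by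
      intro g'
      obtain ⟨p, hpG, hpe⟩ := Subgroup.mem_map.mp g'.2
      obtain ⟨-, τ, k, hk⟩ := htrans p hpG
      have htr : ∀ t ≤ -k, (g' : Equiv.Perm ℝ) t = t - τ := by
        intro t ht
        rw [← hpe, hcapp, hk (-t) (by linarith)]
        ring
      have hB : ψ g' = -τ := amplBot_eq _ (-τ) (-k) (fun t ht => by rw [htr t ht]; ring)
      exact ⟨-k, fun t ht => by rw [hB, htr t ht]; ring⟩
    have hna' : ∃ g ∈ G', ∃ h ∈ G', g * h ≠ h * g := by
      obtain ⟨u, hu, v, hv, huv⟩ := hna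
      refine ⟨c.toMonoidHom u, Subgroup.mem_map_of_mem _ hu,
        c.toMonoidHom v, Subgroup.mem_map_of_mem _ hv, fun hcon => huv ?_⟩
      rw [← map_mul, ← map_mul] at hcon
      exact c.injective hcon
    have hirr' : ∀ t : ℝ, ∃ g ∈ G', g t ≠ t := by
      intro t
      obtain ⟨p, hpG, hpt⟩ := hirr (-t)
      refine ⟨c.toMonoidHom p, Subgroup.mem_map_of_mem _ hpG, ?_⟩
      rw [hcapp]
      intro hcon
      apply hpt
      linarith [hcon]
    have hkey : ∀ u : G, ψ (φ u) = - amplTop (⇑(u : Equiv.Perm ℝ)) := by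
      intro u
      obtain ⟨-, τ, k, hk⟩ := htrans ↑u u.2
      have h1 : amplTop (⇑(u : Equiv.Perm ℝ)) = τ := amplTop_eq _ τ k hk
      have hcoe : ((φ u : G') : Equiv.Perm ℝ) = c.toMonoidHom ↑u := by
        rw [hφdef]; rfl
      have h2 : ψ (φ u) = -τ := by
        rw [hψdef]
        simp only [hcoe]
        refine amplBot_eq _ (-τ) (-k) (fun t ht => ?_)
        rw [hcapp, hk (-t) (by linarith)]
        ring
      rw [h1, h2]
    have hne' : ∃ g' : G', ψ g' ≠ 0 := ⟨φ g0, by rw [hkey g0]; exact neg_ne_zero.mpr hg0⟩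
    have hM' : MemSigma1 (fun g : G => ψ (φ g)) := by
      have heq : (fun g : G => ψ (φ g)) = (fun g : G => -amplTop (⇑(g : Equiv.Perm ℝ))) :=
        funext hkey
      rw [heq]
      exact hM
    exact coreAux G' hmono' ψ hχ' hna' hirr' hne' (memSigma1_of_comp φ ψ hM')
end
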